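/- Let A, B ∈ ℝ^{n×n} be symmetric with B positive semi-definite. Then there exists an invertible W ∈ ℝ^{n×n} such that W^T B W is a 0-1 diagonal matrix and W^T A W is block diagonal of the form diag(S, Λ_1, Λ_2, 0), where S = I_{n_0} ⊗ [[0,1],[1,0]], Λ_1 and Λ_2 are real diagonal, Λ_2 is invertible, and W^T B W = diag(I_{n_0} ⊗ [[1,0],[0,0]], I_{n_1}, 0, 0) conformally. -/

import Mathlib

open Matrix

lemma spectral_split {m : Type*} [Fintype m] [DecidableEq m] (M : Matrix m m ℝ)
    (hM : M.IsHermitian) :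
    ∃ (p q : ℕ) (e : (Fin p ⊕ Fin q) ≃ m) (U : Matrix m m ℝ) (d : Fin p → ℝ),
      Uᵀ * U = 1 ∧ (∀ i, d i ≠ 0) ∧ (M.PosSemidef → ∀ i, 0 < d i) ∧
      (Uᵀ * M * U).submatrix e e = fromBlocks (diagonal d) 0 0 0 := by
  classical
  set f := hM.eigenvalues with hf
  set U : Matrix m m ℝ := (hM.eigenvectorUnitary : Matrix m m ℝ) with hUdef
  have hU : Uᵀ * U = 1 := by
    have := (Matrix.mem_unitaryGroup_iff'.mp hM.eigenvectorUnitary.2)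
    simpa [Matrix.star_eq_conjTranspose] using this
  have hdiag : Uᵀ * M * U = diagonal f := by
    have := hM.conjStarAlgAut_star_eigenvectorUnitary
    rw [Unitary.conjStarAlgAut_star_apply] at this
    simpa [Matrix.star_eq_conjTranspose] using this
  set pP : m → Prop := fun x => f x ≠ 0 with hpP
  set ep := Fintype.equivFin {x // pP x}
  set eq' := Fintype.equivFin {x // ¬ pP x}
  set e : (Fin (Fintype.card {x // pP x}) ⊕ Fin (Fintype.card {x // ¬ pP x})) ≃ m :=
    (Equiv.sumCongr ep.symm eq'.symm).trans (Equiv.sumCompl pP) with he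
  set d : Fin (Fintype.card {x // pP x}) → ℝ := fun i => f ↑(ep.symm i) with hd
  refine ⟨_, _, e, U, d, hU, fun i => (ep.symm i).prop, fun hPSD i => ?_, ?_⟩
  · exact lt_of_le_of_ne (hPSD.eigenvalues_nonneg _) (Ne.symm ((ep.symm i).prop))
  · rw [hdiag]
    ext i j
    rcases i with i | i <;> rcases j with j | j
    · simp only [submatrix_apply, fromBlocks_apply₁₁]
      rcases eq_or_ne i j with rfl | hij
      · simp [diagonal_apply_eq, he, hd]
      · rw [diagonal_apply_ne _ (by simp only [he]; exact fun h => hij (ep.symm.injective (Subtype.coe_injective h))), diagonal_apply_ne _ hij]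
    · rw [submatrix_apply, diagonal_apply_ne _ (by simp only [he, Equiv.trans_apply, Equiv.sumCongr_apply, Sum.map_inl, Sum.map_inr, Equiv.sumCompl_apply_inl, Equiv.sumCompl_apply_inr]; exact fun h => (eq'.symm j).prop (by rw [← h]; exact (ep.symm i).prop))]
      simp
    · rw [submatrix_apply, diagonal_apply_ne _ (by simp only [he, Equiv.trans_apply, Equiv.sumCongr_apply, Sum.map_inl, Sum.map_inr, Equiv.sumCompl_apply_inl, Equiv.sumCompl_apply_inr]; exact fun h => (eq'.symm i).prop (by rw [h]; exact (ep.symm j).prop))]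
      simp
    · simp only [submatrix_apply, fromBlocks_apply₂₂, Matrix.zero_apply]
      rcases eq_or_ne i j with rfl | hij
      · rw [diagonal_apply_eq]
        simpa [he] using not_not.mp (eq'.symm i).prop
      · rw [diagonal_apply_ne _ (by simp only [he]; exact fun h => hij (eq'.symm.injective (Subtype.coe_injective h)))]

lemma submatrix_conj_mul {ι κ : Type*} [Fintype ι] [DecidableEq ι] [Fintype κ] [DecidableEq κ]
    (E : ι ≃ κ) (M : Matrix κ κ ℝ) (T : Matrix ι ι ℝ) :
    ((T.submatrix E.symm E.symm)ᵀ * M * (T.submatrix E.symm E.symm)).submatrix E E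
      = Tᵀ * M.submatrix E E * T := by
  have hM : M = (M.submatrix E E).submatrix E.symm E.symm := by
    rw [submatrix_submatrix]
    simp [Equiv.self_comp_symm]
  rw [transpose_submatrix, hM]
  rw [submatrix_mul_equiv, submatrix_mul_equiv, submatrix_submatrix]
  simp [Equiv.symm_comp_self]

lemma isUnit_submatrix_equiv {ι κ : Type*} [Fintype ι] [DecidableEq ι] [Fintype κ] [DecidableEq κ]
    (E : ι ≃ κ) (T : Matrix κ κ ℝ) (hT : IsUnit T) : IsUnit (T.submatrix E E) := by
  rw [Matrix.isUnit_iff_isUnit_det] at hT ⊢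
  rwa [det_submatrix_equiv_self]

lemma psd_split {m : Type*} [Fintype m] [DecidableEq m] (B : Matrix m m ℝ)
    (hB : B.PosSemidef) :
    ∃ (p q : ℕ) (e : (Fin p ⊕ Fin q) ≃ m) (W : Matrix m m ℝ),
      IsUnit W ∧ (Wᵀ * B * W).submatrix e e = fromBlocks 1 0 0 0 := by
  classical
  obtain ⟨p, q, e, U, d, hU, hd0, hdpos, hUBU⟩ := spectral_split B hB.isHermitian
  have hdpos := hdpos hB
  set c : Fin p → ℝ := fun i => (Real.sqrt (d i))⁻¹ with hc
  set S : Matrix (Fin p ⊕ Fin q) (Fin p ⊕ Fin q) ℝ := fromBlocks (diagonal c) 0 0 1 with hS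
  have hUnitU : IsUnit U := ((Matrix.isUnit_iff_isUnit_det _).mpr (Matrix.isUnit_det_of_left_inverse hU))
  have hUnitS : IsUnit S := by
    rw [Matrix.isUnit_iff_isUnit_det, hS, det_fromBlocks_zero₂₁]
    simp only [det_one, mul_one, det_diagonal]
    exact (Finset.prod_ne_zero_iff.mpr fun i _ => by
      simp [hc, Real.sqrt_ne_zero'.mpr (hdpos i)]).isUnit
  refine ⟨p, q, e, U * S.submatrix e.symm e.symm, hUnitU.mul (isUnit_submatrix_equiv _ _ hUnitS), ?_⟩
  have : (U * S.submatrix e.symm e.symm)ᵀ * B * (U * S.submatrix e.symm e.symm)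
      = (S.submatrix e.symm e.symm)ᵀ * (Uᵀ * B * U) * (S.submatrix e.symm e.symm) := by
    rw [transpose_mul]; simp only [Matrix.mul_assoc]
  have hdc : diagonal c * diagonal d * diagonal c = (1 : Matrix (Fin p) (Fin p) ℝ) := by
    have key : ∀ i, c i * d i * c i = 1 := by
      intro i
      have h1 : Real.sqrt (d i) * Real.sqrt (d i) = d i := Real.mul_self_sqrt (hdpos i).le
      have h2 : Real.sqrt (d i) ≠ 0 := Real.sqrt_ne_zero'.mpr (hdpos i)
      rw [hc, ← h1]
      field_simp
    rw [diagonal_mul_diagonal, diagonal_mul_diagonal, show (fun i => c i * d i * c i) = fun _ => (1:ℝ) from funext key]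
    exact diagonal_one
  rw [this, submatrix_conj_mul, hUBU, hS, fromBlocks_transpose, fromBlocks_multiply,
    fromBlocks_multiply]
  simp only [transpose_zero, transpose_one, diagonal_transpose, Matrix.mul_zero, Matrix.zero_mul,
    add_zero, zero_add, Matrix.mul_one, Matrix.one_mul, hdc]

lemma real_conjT {ι κ : Type*} (M : Matrix ι κ ℝ) : Mᴴ = Mᵀ := by
  ext i j; simp [conjTranspose_apply]

lemma row_reduce {k q : ℕ} (T : Matrix (Fin k) (Fin q) ℝ) (μ : Fin k → ℝ)
    (hμ : ∀ i, 0 < μ i) (hT : T * Tᵀ = diagonal μ) :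
    ∃ (m : ℕ) (e : (Fin k ⊕ Fin m) ≃ Fin q) (V : Matrix (Fin q) (Fin q) ℝ),
      IsUnit V ∧ T * V = (1 : Matrix (Fin q) (Fin q) ℝ).submatrix (fun i => e (Sum.inl i)) id := by
  classical
  set c : Fin k → ℝ := fun i => (Real.sqrt (μ i))⁻¹ with hc
  have hsq : ∀ i, Real.sqrt (μ i) ≠ 0 := fun i => Real.sqrt_ne_zero'.mpr (hμ i)
  set t' : Fin k → EuclideanSpace ℝ (Fin q) := fun i => WithLp.toLp 2 (fun x => c i * T i x) with ht'
  have hinner : ∀ a b, (inner ℝ (t' a) (t' b) : ℝ) = if a = b then 1 else 0 := by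
    intro a b
    have : (inner ℝ (t' a) (t' b) : ℝ) = c a * c b * (T * Tᵀ) a b := by
      simp only [PiLp.inner_apply, RCLike.inner_apply, starRingEnd_apply, star_trivial, ht',
        PiLp.toLp_apply, Matrix.mul_apply, transpose_apply, Finset.mul_sum]
      apply Finset.sum_congr rfl
      intro x _
      ring
    rw [this, hT]
    rcases eq_or_ne a b with rfl | hab
    · rw [diagonal_apply_eq]
      simp only [if_pos rfl, hc]
      rw [← Real.mul_self_sqrt (hμ a).le]
      field_simp
      try exact div_self (mul_ne_zero (hsq a) (hsq a))
      simp [Real.sqrt_sq (Real.sqrt_nonneg (μ a)), hsq a]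
    · rw [diagonal_apply_ne _ hab, if_neg hab, mul_zero]
  have horth : Orthonormal ℝ t' := orthonormal_iff_ite.mpr hinner
  have hk : k ≤ q := by
    have := horth.linearIndependent.fintype_card_le_finrank
    simpa [finrank_euclideanSpace_fin] using this
  set m := q - k with hm
  set e : (Fin k ⊕ Fin m) ≃ Fin q := finSumFinEquiv.trans (finCongr (by omega)) with he
  have heval : ∀ i : Fin k, ((e (Sum.inl i) : Fin q) : ℕ) = (i : ℕ) := by
    intro i; simp [he]
  set v : Fin q → EuclideanSpace ℝ (Fin q) := fun j => if h : (j : ℕ) < k then t' ⟨j, h⟩ else 0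
    with hv
  set s : Set (Fin q) := {j | (j : ℕ) < k} with hs
  have hvo : Orthonormal ℝ (s.restrict v) := by
    rw [orthonormal_iff_ite]
    rintro ⟨a, ha⟩ ⟨b, hb⟩
    have ha' : (a : ℕ) < k := ha
    have hb' : (b : ℕ) < k := hb
    simp only [Set.restrict, Set.restrict_apply, hv, dif_pos ha', dif_pos hb']
    rw [hinner]
    congr 1
    simp [Fin.ext_iff, Subtype.ext_iff]
  obtain ⟨b, hb⟩ := hvo.exists_orthonormalBasis_extension_of_card_eq
    (by simp [finrank_euclideanSpace_fin])
  have key : ∀ i : Fin k, b (e (Sum.inl i)) = t' i := by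
    intro i
    have hlt : ((e (Sum.inl i) : Fin q) : ℕ) < k := by rw [heval]; exact i.isLt
    rw [hb _ hlt]
    have hfin : (⟨((e (Sum.inl i) : Fin q) : ℕ), hlt⟩ : Fin k) = i := Fin.ext (heval i)
    simp only [hv]
    rw [dif_pos hlt, hfin]
  set V0 : Matrix (Fin q) (Fin q) ℝ := Matrix.of fun x y => b y x with hV0def
  have hV0 : V0ᵀ * V0 = 1 := by
    ext y y'
    have : (V0ᵀ * V0) y y' = (inner ℝ (b y) (b y') : ℝ) := by
      simp only [Matrix.mul_apply, transpose_apply, PiLp.inner_apply, RCLike.inner_apply,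
        starRingEnd_apply, star_trivial, hV0def, Matrix.of_apply]
      exact Finset.sum_congr rfl fun _ _ => mul_comm _ _
    rw [this, orthonormal_iff_ite.mp b.orthonormal, one_apply]
  have hTV0 : T * V0 = diagonal (fun i => Real.sqrt (μ i)) * (1 : Matrix (Fin q) (Fin q) ℝ).submatrix (fun i => e (Sum.inl i)) id := by
    ext i y
    rw [diagonal_mul]
    have h1 : (inner ℝ (t' i) (b y) : ℝ) = c i * (T * V0) i y := by
      simp only [Matrix.mul_apply, PiLp.inner_apply, RCLike.inner_apply, starRingEnd_apply,
        star_trivial, ht', PiLp.toLp_apply, hV0def, Matrix.of_apply, Finset.mul_sum]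
      apply Finset.sum_congr rfl
      intro x _
      ring
    have h2 : (T * V0) i y = Real.sqrt (μ i) * (inner ℝ (t' i) (b y) : ℝ) := by
      rw [h1, hc, ← mul_assoc, mul_inv_cancel₀ (hsq i), one_mul]
    rw [h2, ← key i, orthonormal_iff_ite.mp b.orthonormal]
    simp [one_apply, submatrix_apply]
  set D : Matrix (Fin k ⊕ Fin m) (Fin k ⊕ Fin m) ℝ := fromBlocks (diagonal c) 0 0 1 with hD
  have hUnitV0 : IsUnit V0 := ((Matrix.isUnit_iff_isUnit_det _).mpr (Matrix.isUnit_det_of_left_inverse hV0))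
  have hUnitD : IsUnit D := by
    rw [Matrix.isUnit_iff_isUnit_det, hD, det_fromBlocks_zero₂₁]
    simp only [det_one, mul_one, det_diagonal]
    exact (Finset.prod_ne_zero_iff.mpr fun i _ => by simp [hc, hsq i]).isUnit
  refine ⟨m, e, V0 * D.submatrix e.symm e.symm, hUnitV0.mul ?_, ?_⟩
  · rw [Matrix.isUnit_iff_isUnit_det, det_submatrix_equiv_self]
    exact (Matrix.isUnit_iff_isUnit_det _).mp hUnitD
  · rw [← Matrix.mul_assoc, hTV0, Matrix.mul_assoc]
    have h2 : (1 : Matrix (Fin q) (Fin q) ℝ).submatrix (fun i => e (Sum.inl i)) id *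
        D.submatrix e.symm e.symm = D.submatrix (fun i => Sum.inl i) e.symm := by
      ext i z
      simp only [Matrix.mul_apply, submatrix_apply, one_apply, id_eq, ite_mul, one_mul, zero_mul]
      rw [Finset.sum_ite_eq Finset.univ (e (Sum.inl i)) (fun y => D (e.symm y) (e.symm z))]
      simp
    rw [h2, hD]
    ext i y
    rw [diagonal_mul, submatrix_apply, submatrix_apply, id_eq, one_apply]
    rcases hy : e.symm y with j | j
    · have hyy : y = e (Sum.inl j) := by rw [← hy]; simp
      subst hyy
      rcases eq_or_ne i j with rfl | hij
      · rw [fromBlocks_apply₁₁, diagonal_apply_eq, if_pos rfl, hc, mul_inv_cancel₀ (hsq i)]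
      · rw [fromBlocks_apply₁₁, diagonal_apply_ne _ hij, mul_zero,
          if_neg (fun h => hij (Sum.inl_injective (e.injective h)))]
    · have hyy : y = e (Sum.inr j) := by rw [← hy]; simp
      subst hyy
      rw [fromBlocks_apply₁₂]
      simp only [Matrix.zero_apply, mul_zero]
      rw [if_neg (fun h => Sum.inl_ne_inr (e.injective h))]

section helpers

lemma sym_diag {m : Type*} [Fintype m] [DecidableEq m] (M : Matrix m m ℝ) (hM : M.IsHermitian) :
    ∃ (U : Matrix m m ℝ) (d : m → ℝ), Uᵀ * U = 1 ∧ Uᵀ * M * U = diagonal d := by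
  refine ⟨(hM.eigenvectorUnitary : Matrix m m ℝ), hM.eigenvalues, ?_, ?_⟩
  · have := (Matrix.mem_unitaryGroup_iff'.mp hM.eigenvectorUnitary.2)
    simpa [Matrix.star_eq_conjTranspose] using this
  · have := hM.conjStarAlgAut_star_eigenvectorUnitary
    rw [Unitary.conjStarAlgAut_star_apply] at this
    simpa [Matrix.star_eq_conjTranspose] using this

lemma herm_of_transpose {m : Type*} {M : Matrix m m ℝ} (h : Mᵀ = M) : M.IsHermitian := by
  show Mᴴ = M
  rw [real_conjT, h]

lemma mul_self_transpose_eq_zero {ι κ : Type*} [Fintype κ] (M : Matrix ι κ ℝ)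
    (h : M * Mᵀ = 0) : M = 0 := by
  have h2 : (Mᵀ)ᴴ * Mᵀ = 0 := by rw [real_conjT, transpose_transpose, h]
  have := Matrix.conjTranspose_mul_self_eq_zero.mp h2
  rw [← transpose_transpose M, this, transpose_zero]

lemma step_congr {n : ℕ} {ι : Type*} [Fintype ι] [DecidableEq ι] (E : ι ≃ Fin n)
    {M W1 : Matrix (Fin n) (Fin n) ℝ} {M1 : Matrix ι ι ℝ} (T : Matrix ι ι ℝ)
    (h : (W1ᵀ * M * W1).submatrix E E = M1) :
    (((W1 * T.submatrix E.symm E.symm)ᵀ) * M * (W1 * T.submatrix E.symm E.symm)).submatrix E E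
      = Tᵀ * M1 * T := by
  rw [← h, ← submatrix_conj_mul E (W1ᵀ * M * W1) T]
  congr 1
  rw [transpose_mul]
  simp only [Matrix.mul_assoc]

lemma reindex_stage {n : ℕ} {ι ι' : Type*} [Fintype ι] [DecidableEq ι] [Fintype ι']
    [DecidableEq ι'] (E : ι ≃ Fin n) (g : ι' ≃ ι) (M : Matrix (Fin n) (Fin n) ℝ)
    (M1 : Matrix ι ι ℝ) (h : M.submatrix E E = M1) :
    M.submatrix (g.trans E) (g.trans E) = M1.submatrix g g := by
  rw [← h, Equiv.coe_trans, ← submatrix_submatrix]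

lemma fromBlocks_submatrix {α m₁ m₂ n₁ n₂ m₁' m₂' n₁' n₂' : Type*}
    (A : Matrix m₁ n₁ α) (B : Matrix m₁ n₂ α) (C : Matrix m₂ n₁ α) (D : Matrix m₂ n₂ α)
    (f : m₁' → m₁) (g : m₂' → m₂) (f' : n₁' → n₁) (g' : n₂' → n₂) :
    (fromBlocks A B C D).submatrix (Sum.map f g) (Sum.map f' g')
      = fromBlocks (A.submatrix f f') (B.submatrix f g') (C.submatrix g f') (D.submatrix g g') := by
  ext (i | i) (j | j) <;> simp

lemma fromCols_submatrix {α m n₁ n₂ m' n₁' n₂' : Type*}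
    (A : Matrix m n₁ α) (B : Matrix m n₂ α) (f : m' → m) (f' : n₁' → n₁) (g' : n₂' → n₂) :
    (fromCols A B).submatrix f (Sum.map f' g')
      = fromCols (A.submatrix f f') (B.submatrix f g') := by
  ext i (j | j) <;> simp

lemma fromRows_submatrix {α m₁ m₂ n m₁' m₂' n' : Type*}
    (A : Matrix m₁ n α) (B : Matrix m₂ n α) (f : m₁' → m₁) (g : m₂' → m₂) (h : n' → n) :
    (fromRows A B).submatrix (Sum.map f g) h
      = fromRows (A.submatrix f h) (B.submatrix g h) := by
  ext (i | i) j <;> simp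

lemma fromRows_submatrix_col {α m₁ m₂ n n' : Type*}
    (A : Matrix m₁ n α) (B : Matrix m₂ n α) (h : n' → n) :
    (fromRows A B).submatrix id h = fromRows (A.submatrix id h) (B.submatrix id h) := by
  ext (i | i) j <;> simp

lemma fromCols_add {α m n₁ n₂ : Type*} [Add α]
    (A A' : Matrix m n₁ α) (B B' : Matrix m n₂ α) :
    fromCols A B + fromCols A' B' = fromCols (A + A') (B + B') := by
  ext i (j | j) <;> simp

lemma fromRows_add {α m₁ m₂ n : Type*} [Add α]
    (A A' : Matrix m₁ n α) (B B' : Matrix m₂ n α) :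
    fromRows A B + fromRows A' B' = fromRows (A + A') (B + B') := by
  ext (i | i) j <;> simp

lemma isUnit_fromBlocks_diag {m₁ m₂ : Type*} [Fintype m₁] [DecidableEq m₁] [Fintype m₂]
    [DecidableEq m₂] {A : Matrix m₁ m₁ ℝ} {D : Matrix m₂ m₂ ℝ}
    (hA : IsUnit A) (hD : IsUnit D) : IsUnit (fromBlocks A 0 0 D) := by
  rw [Matrix.isUnit_iff_isUnit_det, det_fromBlocks_zero₂₁]
  exact ((Matrix.isUnit_iff_isUnit_det A).mp hA).mul ((Matrix.isUnit_iff_isUnit_det D).mp hD)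

lemma isUnit_fromBlocks_lower {m₁ m₂ : Type*} [Fintype m₁] [DecidableEq m₁] [Fintype m₂]
    [DecidableEq m₂] (X : Matrix m₂ m₁ ℝ) :
    IsUnit (fromBlocks (1 : Matrix m₁ m₁ ℝ) 0 X (1 : Matrix m₂ m₂ ℝ)) := by
  rw [Matrix.isUnit_iff_isUnit_det, det_fromBlocks_zero₁₂]
  simp

lemma select_cols {k m : ℕ} (e5 : (Fin k ⊕ Fin m) ≃ Fin q) :
    ((1 : Matrix (Fin q) (Fin q) ℝ).submatrix (fun i => e5 (Sum.inl i)) id).submatrix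
        id e5 = fromCols (1 : Matrix (Fin k) (Fin k) ℝ) (0 : Matrix (Fin k) (Fin m) ℝ) := by
  ext i (j | j)
  · rw [fromCols_apply_inl, submatrix_apply, submatrix_apply, id_eq, one_apply]
    by_cases h : i = j
    · subst h; simp
    · rw [if_neg (show ¬ e5 (Sum.inl i) = id (e5 (Sum.inl j)) from
        fun hh => h (Sum.inl_injective (e5.injective hh))), Matrix.one_apply_ne h]
  · rw [fromCols_apply_inr, submatrix_apply, submatrix_apply, id_eq, one_apply]
    rw [if_neg (show ¬ e5 (Sum.inl i) = id (e5 (Sum.inr j)) from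
        fun hh => by simpa using e5.injective hh)]
    simp

def pairing (k l p m : ℕ) :
    ((Fin k × Fin 2) ⊕ (Fin l ⊕ (Fin p ⊕ Fin m))) ≃
      ((Fin k ⊕ Fin l) ⊕ (Fin p ⊕ (Fin k ⊕ Fin m))) where
  toFun x := match x with
    | Sum.inl (i, a) => if a = 0 then Sum.inl (Sum.inl i) else Sum.inr (Sum.inr (Sum.inl i))
    | Sum.inr (Sum.inl j) => Sum.inl (Sum.inr j)
    | Sum.inr (Sum.inr (Sum.inl j)) => Sum.inr (Sum.inl j)
    | Sum.inr (Sum.inr (Sum.inr j)) => Sum.inr (Sum.inr (Sum.inr j))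
  invFun y := match y with
    | Sum.inl (Sum.inl i) => Sum.inl (i, 0)
    | Sum.inl (Sum.inr j) => Sum.inr (Sum.inl j)
    | Sum.inr (Sum.inl j) => Sum.inr (Sum.inr (Sum.inl j))
    | Sum.inr (Sum.inr (Sum.inl i)) => Sum.inl (i, 1)
    | Sum.inr (Sum.inr (Sum.inr j)) => Sum.inr (Sum.inr (Sum.inr j))
  left_inv x := by
    rcases x with ⟨i, a⟩ | (j | (j | j))
    · fin_cases a <;> simp
    all_goals simp
  right_inv y := by
    rcases y with (i | j) | (j | (i | j)) <;> simp [Fin.ext_iff]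

end helpers

section conj
variable {a b : Type*} [Fintype a] [DecidableEq a] [Fintype b] [DecidableEq b]

lemma lower_elim (G : Matrix a a ℝ) (E : Matrix a b ℝ) (F : Matrix b b ℝ) (X : Matrix b a ℝ) :
    (fromBlocks 1 0 X 1)ᵀ * fromBlocks G E Eᵀ F * fromBlocks 1 0 X 1
      = fromBlocks (G + E*X + Xᵀ*Eᵀ + Xᵀ*F*X) (E + Xᵀ*F) (Eᵀ + F*X) F := by
  rw [fromBlocks_transpose, fromBlocks_multiply, fromBlocks_multiply]
  congr 1 <;> simp only [transpose_one, transpose_zero, Matrix.one_mul, Matrix.mul_one,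
    Matrix.zero_mul, Matrix.mul_zero, add_zero, zero_add, Matrix.mul_add, Matrix.add_mul,
    Matrix.mul_assoc] <;> abel

lemma lower_elim_B (X : Matrix b a ℝ) :
    (fromBlocks 1 0 X 1)ᵀ * fromBlocks (1 : Matrix a a ℝ) 0 0 (0 : Matrix b b ℝ) *
      fromBlocks 1 0 X 1 = fromBlocks 1 0 0 0 := by
  rw [fromBlocks_transpose, fromBlocks_multiply, fromBlocks_multiply]
  simp

lemma diag_conj (P : Matrix a a ℝ) (Q : Matrix b b ℝ) (G : Matrix a a ℝ) (E : Matrix a b ℝ)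
    (Et : Matrix b a ℝ) (F : Matrix b b ℝ) :
    (fromBlocks P 0 0 Q)ᵀ * fromBlocks G E Et F * fromBlocks P 0 0 Q
      = fromBlocks (Pᵀ*G*P) (Pᵀ*(E*Q)) (Qᵀ*(Et*P)) (Qᵀ*(F*Q)) := by
  rw [fromBlocks_transpose, fromBlocks_multiply, fromBlocks_multiply]
  congr 1 <;> simp only [transpose_zero, Matrix.one_mul, Matrix.mul_one, Matrix.zero_mul,
    Matrix.mul_zero, add_zero, zero_add, Matrix.mul_assoc]

lemma diag_conj_B (P : Matrix a a ℝ) (Q : Matrix b b ℝ) (hP : Pᵀ * P = 1) :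
    (fromBlocks P 0 0 Q)ᵀ * fromBlocks (1 : Matrix a a ℝ) 0 0 (0 : Matrix b b ℝ) *
      fromBlocks P 0 0 Q = fromBlocks 1 0 0 0 := by
  rw [fromBlocks_transpose, fromBlocks_multiply, fromBlocks_multiply]
  simp only [transpose_zero, Matrix.one_mul, Matrix.mul_one, Matrix.zero_mul,
    Matrix.mul_zero, add_zero, zero_add, hP]

end conj




open Matrix Kronecker

/-- canonical form of a symmetric semi-definite pencil: for A symmetric
and B positive semi-definite there are block sizes n₀,n₁,n₂,n₃ with 2n₀+n₁+n₂+n₃ = n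
(encoded by the equivalence e) and an invertible W with
WᵀAW = diag(I_{n₀}⊗[[0,1],[1,0]], Λ₁, Λ₂, 0) and
WᵀBW = diag(I_{n₀}⊗[[1,0],[0,0]], I_{n₁}, 0, 0), Λ₁, Λ₂ real diagonal, Λ₂ invertible. -/
theorem stmt9 {n : ℕ} (A B : Matrix (Fin n) (Fin n) ℝ)
    (hA : A.IsHermitian) (hB : B.PosSemidef) :
    ∃ (n0 n1 n2 n3 : ℕ)
      (e : ((Fin n0 × Fin 2) ⊕ (Fin n1 ⊕ (Fin n2 ⊕ Fin n3))) ≃ Fin n)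
      (W : Matrix (Fin n) (Fin n) ℝ) (Λ1 : Fin n1 → ℝ) (Λ2 : Fin n2 → ℝ),
      IsUnit W ∧ (∀ i, Λ2 i ≠ 0) ∧
      (Wᵀ * A * W).submatrix e e
        = Matrix.fromBlocks ((1 : Matrix (Fin n0) (Fin n0) ℝ) ⊗ₖ !![(0:ℝ),1;1,0]) 0 0
            (Matrix.fromBlocks (Matrix.diagonal Λ1) 0 0
              (Matrix.fromBlocks (Matrix.diagonal Λ2) 0 0 0)) ∧
      (Wᵀ * B * W).submatrix e e
        = Matrix.fromBlocks ((1 : Matrix (Fin n0) (Fin n0) ℝ) ⊗ₖ !![(1:ℝ),0;0,0]) 0 0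
            (Matrix.fromBlocks (1 : Matrix (Fin n1) (Fin n1) ℝ) 0 0 0) := by
  classical
  have hAt : Aᵀ = A := by rw [← real_conjT]; exact hA
  -- Stage 1 : normalize B
  obtain ⟨r, s, e1, W1, hW1u, hB1⟩ := psd_split B hB
  set A1 : Matrix (Fin r ⊕ Fin s) (Fin r ⊕ Fin s) ℝ := (W1ᵀ * A * W1).submatrix e1 e1 with hA1def
  have hA1 : (W1ᵀ * A * W1).submatrix e1 e1 = A1 := rfl
  have hA1sym : A1ᵀ = A1 := by
    rw [hA1def, transpose_submatrix]
    congr 1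
    rw [transpose_mul, transpose_mul, transpose_transpose, hAt, Matrix.mul_assoc]
  have hA1entry : ∀ x y, A1 y x = A1 x y := fun x y => congrFun (congrFun hA1sym x) y
  -- Stage 2 : diagonalize the (2,2) block of A
  set A11 := A1.toBlocks₁₁ with hA11def
  set A12 := A1.toBlocks₁₂ with hA12def
  set A22 := A1.toBlocks₂₂ with hA22def
  have hA11sym : A11ᵀ = A11 := by
    ext i j; exact hA1entry (Sum.inl i) (Sum.inl j)
  have hA22herm : A22.IsHermitian := herm_of_transpose (by
    ext i j; exact hA1entry (Sum.inr i) (Sum.inr j))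
  obtain ⟨p, q3, g2, U2, d2, hU2, hd2ne, -, hA22⟩ := spectral_split A22 hA22herm
  have hA21 : A1.toBlocks₂₁ = A12ᵀ := by
    ext i j; exact hA1entry (Sum.inl j) (Sum.inr i)
  have hA1blocks : A1 = fromBlocks A11 A12 A12ᵀ A22 := by
    rw [← hA21, hA11def, hA12def, hA22def]
    exact (fromBlocks_toBlocks A1).symm
  set T2 : Matrix (Fin r ⊕ Fin s) (Fin r ⊕ Fin s) ℝ := fromBlocks 1 0 0 U2 with hT2def
  set W2 := W1 * T2.submatrix e1.symm e1.symm with hW2def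
  have hstep2 : (W2ᵀ * A * W2).submatrix e1 e1
      = fromBlocks A11 (A12 * U2) (U2ᵀ * A12ᵀ) (U2ᵀ * A22 * U2) := by
    rw [step_congr e1 T2 hA1, hT2def, hA1blocks, fromBlocks_transpose, fromBlocks_multiply,
      fromBlocks_multiply]
    simp only [transpose_one, transpose_zero, Matrix.one_mul, Matrix.mul_one, Matrix.zero_mul,
      Matrix.mul_zero, add_zero, zero_add, Matrix.mul_assoc]
  have hB2 : (W2ᵀ * B * W2).submatrix e1 e1 = fromBlocks 1 0 0 0 := by
    rw [step_congr e1 T2 hB1, hT2def, fromBlocks_transpose, fromBlocks_multiply,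
      fromBlocks_multiply]
    simp only [transpose_one, transpose_zero, Matrix.one_mul, Matrix.mul_one, Matrix.zero_mul,
      Matrix.mul_zero, add_zero, zero_add]
  -- reindex stage 2
  set E2 : (Fin r ⊕ (Fin p ⊕ Fin q3)) ≃ Fin n := ((Equiv.refl (Fin r)).sumCongr g2).trans e1
    with hE2def
  set Ec := (A12 * U2).submatrix id ⇑g2 with hEcdef
  set E2c := Ec.toCols₁ with hE2cdef
  set E3c := Ec.toCols₂ with hE3cdef
  have hEc : Ec = fromCols E2c E3c := (fromCols_toCols Ec).symm
  have hA2' : (W2ᵀ * A * W2).submatrix E2 E2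
      = fromBlocks A11 (fromCols E2c E3c) (fromCols E2c E3c)ᵀ
          (fromBlocks (diagonal d2) 0 0 0) := by
    rw [hE2def, reindex_stage e1 _ _ _ hstep2,
      show ⇑((Equiv.refl (Fin r)).sumCongr g2) = Sum.map id ⇑g2 from rfl, fromBlocks_submatrix]
    rw [submatrix_id_id, hA22, ← hEc, ← hEcdef]
    congr 1
    rw [hEcdef, transpose_submatrix, transpose_mul]
  have hB2' : (W2ᵀ * B * W2).submatrix E2 E2 = fromBlocks 1 0 0 0 := by
    rw [hE2def, reindex_stage e1 _ _ _ hB2]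
    ext (i | i) (j | j) <;>
      simp [Equiv.sumCongr_apply, one_apply, Sum.inl.injEq, g2.injective.eq_iff]
  -- Stage 3 : eliminate the coupling between the r-block and the p-block
  set Dinv : Matrix (Fin p) (Fin p) ℝ := diagonal (fun i => (d2 i)⁻¹) with hDinvdef
  set X3 : Matrix (Fin p ⊕ Fin q3) (Fin r) ℝ := fromRows (-(Dinv * E2cᵀ)) 0 with hX3def
  set T3 : Matrix (Fin r ⊕ (Fin p ⊕ Fin q3)) (Fin r ⊕ (Fin p ⊕ Fin q3)) ℝ :=
    fromBlocks 1 0 X3 1 with hT3def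
  set W3 := W2 * T3.submatrix E2.symm E2.symm with hW3def
  set G3 : Matrix (Fin r) (Fin r) ℝ := A11 - E2c * (Dinv * E2cᵀ) with hG3def
  have hG3sym : G3ᵀ = G3 := by
    rw [hG3def, transpose_sub, hA11sym, transpose_mul, transpose_mul, transpose_transpose,
      diagonal_transpose, Matrix.mul_assoc]
  have hX3T : X3ᵀ = fromCols (-(E2c * Dinv)) 0 := by
    rw [hX3def, transpose_fromRows, transpose_neg, transpose_mul, transpose_transpose,
      diagonal_transpose, transpose_zero, ← hDinvdef]
  have hDD : Dinv * diagonal d2 = 1 := by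
    rw [hDinvdef, diagonal_mul_diagonal,
      show (fun i => (d2 i)⁻¹ * d2 i) = fun _ => (1:ℝ) from funext fun i => inv_mul_cancel₀ (hd2ne i)]
    exact diagonal_one
  have hDD' : diagonal d2 * Dinv = 1 := by
    rw [hDinvdef, diagonal_mul_diagonal,
      show (fun i => d2 i * (d2 i)⁻¹) = fun _ => (1:ℝ) from funext fun i => mul_inv_cancel₀ (hd2ne i)]
    exact diagonal_one
  have hXF : X3ᵀ * (fromBlocks (diagonal d2) 0 0 0 :
      Matrix (Fin p ⊕ Fin q3) (Fin p ⊕ Fin q3) ℝ) = fromCols (-E2c) 0 := by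
    rw [hX3T, fromCols_mul_fromBlocks]
    simp only [Matrix.zero_mul, Matrix.mul_zero, add_zero, zero_add, Matrix.neg_mul,
      Matrix.mul_assoc, hDD]
    rw [Matrix.mul_one]
  have hFX : (fromBlocks (diagonal d2) 0 0 0 :
      Matrix (Fin p ⊕ Fin q3) (Fin p ⊕ Fin q3) ℝ) * X3 = fromRows (-E2cᵀ) 0 := by
    rw [hX3def, fromBlocks_mul_fromRows]
    simp only [Matrix.zero_mul, Matrix.mul_zero, add_zero, zero_add, Matrix.mul_neg,
      ← Matrix.mul_assoc, hDD', neg_zero]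
    rw [Matrix.one_mul]
  have hEcX : fromCols E2c E3c * X3 = -(E2c * (Dinv * E2cᵀ)) := by
    rw [hX3def, fromCols_mul_fromRows, Matrix.mul_zero, add_zero, Matrix.mul_neg]
  have hA3 : (W3ᵀ * A * W3).submatrix E2 E2
      = fromBlocks G3 (fromCols 0 E3c) (fromRows 0 E3cᵀ) (fromBlocks (diagonal d2) 0 0 0) := by
    rw [step_congr E2 T3 hA2', hT3def, lower_elim]
    rw [Matrix.fromBlocks_inj]
    refine ⟨?_, ?_, ?_, rfl⟩
    · rw [hEcX, hXF, hG3def]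
      have h3 : X3ᵀ * (fromCols E2c E3c)ᵀ = -(E2c * (Dinv * E2cᵀ)) := by
        rw [transpose_fromCols, hX3T, fromCols_mul_fromRows, Matrix.zero_mul, add_zero,
          Matrix.neg_mul, Matrix.mul_assoc]
      have h4 : (fromCols (-E2c) 0 : Matrix (Fin r) (Fin p ⊕ Fin q3) ℝ) * X3 = E2c * (Dinv * E2cᵀ) := by
        rw [hX3def, fromCols_mul_fromRows, Matrix.zero_mul, add_zero, Matrix.neg_mul,
          Matrix.mul_neg, neg_neg]
      rw [h3, h4]
      abel
    · rw [hXF, fromCols_add, add_neg_cancel, add_zero]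
    · rw [transpose_fromCols, hFX, fromRows_add, add_neg_cancel, add_zero]
  have hB3 : (W3ᵀ * B * W3).submatrix E2 E2 = fromBlocks 1 0 0 0 := by
    rw [step_congr E2 T3 hB2', hT3def, lower_elim_B]
  -- Stage 4 : reduce the coupling between the r-block and the q3-block
  have hpsdM4 : (E3c * E3cᵀ).PosSemidef := by
    have := Matrix.posSemidef_self_mul_conjTranspose E3c
    rwa [real_conjT] at this
  obtain ⟨k, l, h4, U4, μ, hU4, hμne, hμposf, hM4⟩ :=
    spectral_split (E3c * E3cᵀ) hpsdM4.isHermitian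
  have hμpos := hμposf hpsdM4
  set N : Matrix (Fin k ⊕ Fin l) (Fin q3) ℝ := (U4ᵀ * E3c).submatrix ⇑h4 id with hNdef
  have hNNt : N * Nᵀ = fromBlocks (diagonal μ) 0 0 0 := by
    rw [hNdef, transpose_submatrix, transpose_mul, transpose_transpose,
      ← Matrix.submatrix_mul _ _ ⇑h4 id ⇑h4 Function.bijective_id, ← hM4]
    congr 1
    simp only [Matrix.mul_assoc]
  set N1 := N.toRows₁ with hN1def
  set N2 := N.toRows₂ with hN2def
  have hNblocks : N * Nᵀ = fromBlocks (N1*N1ᵀ) (N1*N2ᵀ) (N2*N1ᵀ) (N2*N2ᵀ) := by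
    conv_lhs => rw [← fromRows_toRows N, ← hN1def, ← hN2def, transpose_fromRows,
      fromRows_mul_fromCols]
  have hN2z : N2 = 0 := by
    have h22 := congrArg Matrix.toBlocks₂₂ (hNblocks.symm.trans hNNt)
    simp only [Matrix.toBlocks_fromBlocks₂₂] at h22
    exact mul_self_transpose_eq_zero _ h22
  have hN1d : N1 * N1ᵀ = diagonal μ := by
    have h11 := congrArg Matrix.toBlocks₁₁ (hNblocks.symm.trans hNNt)
    simpa only [Matrix.toBlocks_fromBlocks₁₁] using h11
  obtain ⟨m, e5, V, hVu, hN1V⟩ := row_reduce N1 μ hμpos hN1d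
  set Q4 : Matrix (Fin p ⊕ Fin q3) (Fin p ⊕ Fin q3) ℝ := fromBlocks 1 0 0 V with hQ4def
  set T4 : Matrix (Fin r ⊕ (Fin p ⊕ Fin q3)) (Fin r ⊕ (Fin p ⊕ Fin q3)) ℝ :=
    fromBlocks U4 0 0 Q4 with hT4def
  set W4 := W3 * T4.submatrix E2.symm E2.symm with hW4def
  have hA4 : (W4ᵀ * A * W4).submatrix E2 E2
      = fromBlocks (U4ᵀ * G3 * U4) (fromCols 0 (U4ᵀ * (E3c * V)))
          (fromRows 0 ((U4ᵀ * (E3c * V))ᵀ)) (fromBlocks (diagonal d2) 0 0 0) := by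
    rw [step_congr E2 T4 hA3, hT4def, diag_conj]
    rw [Matrix.fromBlocks_inj]
    refine ⟨rfl, ?_, ?_, ?_⟩
    · rw [hQ4def, fromCols_mul_fromBlocks]
      simp only [Matrix.zero_mul, Matrix.mul_zero, add_zero, zero_add]
      rw [mul_fromCols, Matrix.mul_zero]
    · rw [hQ4def, fromBlocks_transpose, fromRows_mul, Matrix.zero_mul, fromBlocks_mul_fromRows]
      simp only [transpose_one, transpose_zero, Matrix.zero_mul, Matrix.mul_zero, add_zero,
        zero_add, Matrix.one_mul]
      rw [transpose_mul, transpose_mul, transpose_transpose, Matrix.mul_assoc]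
    · rw [hQ4def, fromBlocks_transpose, fromBlocks_multiply, fromBlocks_multiply]
      simp only [transpose_one, transpose_zero, Matrix.one_mul, Matrix.mul_one, Matrix.zero_mul,
        Matrix.mul_zero, add_zero, zero_add]
  have hB4 : (W4ᵀ * B * W4).submatrix E2 E2 = fromBlocks 1 0 0 0 := by
    rw [step_congr E2 T4 hB3, hT4def, diag_conj_B _ _ hU4]
  -- reindex stage 4
  set g4 : ((Fin k ⊕ Fin l) ⊕ (Fin p ⊕ (Fin k ⊕ Fin m))) ≃ (Fin r ⊕ (Fin p ⊕ Fin q3)) :=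
    h4.sumCongr ((Equiv.refl (Fin p)).sumCongr e5) with hg4def
  set E4 := g4.trans E2 with hE4def
  set G4 : Matrix (Fin k ⊕ Fin l) (Fin k ⊕ Fin l) ℝ := (U4ᵀ * G3 * U4).submatrix ⇑h4 ⇑h4
    with hG4def
  have hG4sym : G4ᵀ = G4 := by
    rw [hG4def, transpose_submatrix]
    congr 1
    rw [transpose_mul, transpose_mul, transpose_transpose, hG3sym, Matrix.mul_assoc]
  set Etil : Matrix (Fin k ⊕ Fin l) (Fin k ⊕ Fin m) ℝ :=
    fromRows (fromCols 1 0) 0 with hEtildef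
  have hZ : (U4ᵀ * (E3c * V)).submatrix ⇑h4 ⇑e5 = Etil := by
    have h1 : (U4ᵀ * (E3c * V)).submatrix ⇑h4 id = N * V := by
      rw [← Matrix.mul_assoc, Matrix.submatrix_mul _ _ ⇑h4 id id Function.bijective_id,
        submatrix_id_id, hNdef]
    have h2 : (U4ᵀ * (E3c * V)).submatrix ⇑h4 ⇑e5
        = ((U4ᵀ * (E3c * V)).submatrix ⇑h4 id).submatrix id ⇑e5 := by
      rw [submatrix_submatrix]
      congr
    rw [h2, h1]
    have h3 : N * V = fromRows (N1 * V) 0 := by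
      conv_lhs => rw [← fromRows_toRows N, ← hN1def, ← hN2def]
      rw [fromRows_mul, hN2z, Matrix.zero_mul]
    rw [h3, fromRows_submatrix_col, hN1V, select_cols e5, hEtildef, submatrix_zero]
    rfl
  have hA4' : (W4ᵀ * A * W4).submatrix E4 E4
      = fromBlocks G4 (fromCols 0 Etil) ((fromCols 0 Etil)ᵀ)
          (fromBlocks (diagonal d2) 0 0 0) := by
    rw [hE4def, reindex_stage E2 g4 _ _ hA4, hg4def,
      show ⇑(h4.sumCongr ((Equiv.refl (Fin p)).sumCongr e5)) = Sum.map ⇑h4 (Sum.map id ⇑e5)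
        from rfl, fromBlocks_submatrix]
    rw [Matrix.fromBlocks_inj]
    refine ⟨rfl, ?_, ?_, ?_⟩
    · rw [fromCols_submatrix]
      simp only [submatrix_zero, Pi.zero_apply]
      rw [hZ]
    · rw [fromRows_submatrix]
      simp only [submatrix_zero, Pi.zero_apply]
      rw [transpose_fromCols, transpose_zero]
      congr 1
      rw [← transpose_submatrix, hZ]
    · ext (i | i) (j | j) <;> simp [Sum.map, diagonal_apply, e5.injective.eq_iff]
  have hB4' : (W4ᵀ * B * W4).submatrix E4 E4 = fromBlocks 1 0 0 0 := by
    rw [hE4def, reindex_stage E2 g4 _ _ hB4, hg4def]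
    ext (i | i) (j | j) <;>
      simp [Equiv.sumCongr_apply, one_apply, h4.injective.eq_iff]
  -- Stage 5 : clear G11 and G12 using the identity coupling
  set G11 := G4.toBlocks₁₁ with hG11def
  set G12 := G4.toBlocks₁₂ with hG12def
  set G22 := G4.toBlocks₂₂ with hG22def
  have hG4entry : ∀ x y, G4 y x = G4 x y := fun x y => congrFun (congrFun hG4sym x) y
  have hG11sym : G11ᵀ = G11 := by
    ext i j; exact hG4entry (Sum.inl i) (Sum.inl j)
  have hG22sym : G22ᵀ = G22 := by
    ext i j; exact hG4entry (Sum.inr i) (Sum.inr j)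
  have hG21 : G4.toBlocks₂₁ = G12ᵀ := by
    ext i j; exact hG4entry (Sum.inl j) (Sum.inr i)
  have hG4blocks : G4 = fromBlocks G11 G12 G12ᵀ G22 := by
    rw [← hG21, hG11def, hG12def, hG22def]
    exact (fromBlocks_toBlocks G4).symm
  set Y : Matrix (Fin k) (Fin k ⊕ Fin l) ℝ :=
    fromCols (-((2:ℝ)⁻¹ • G11)) (-G12) with hYdef
  set Y5 : Matrix (Fin p ⊕ (Fin k ⊕ Fin m)) (Fin k ⊕ Fin l) ℝ :=
    fromRows 0 (fromRows Y 0) with hY5def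
  set T5 : Matrix ((Fin k ⊕ Fin l) ⊕ (Fin p ⊕ (Fin k ⊕ Fin m)))
      ((Fin k ⊕ Fin l) ⊕ (Fin p ⊕ (Fin k ⊕ Fin m))) ℝ := fromBlocks 1 0 Y5 1 with hT5def
  set W5 := W4 * T5.submatrix E4.symm E4.symm with hW5def
  have hEY : (fromCols 0 Etil : Matrix (Fin k ⊕ Fin l) (Fin p ⊕ (Fin k ⊕ Fin m)) ℝ) * Y5 = fromBlocks (-((2:ℝ)⁻¹ • G11)) (-G12) 0 0 := by
    rw [hY5def, fromCols_mul_fromRows, Matrix.zero_mul, zero_add, hEtildef, fromRows_mul,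
      Matrix.zero_mul, fromCols_mul_fromRows, Matrix.zero_mul, add_zero,
      Matrix.one_mul, hYdef,
      show (0 : Matrix (Fin l) (Fin k ⊕ Fin l) ℝ) = fromCols 0 0 from fromCols_zero.symm,
      fromRows_fromCols_eq_fromBlocks]
  have hY5F : Y5ᵀ * (fromBlocks (diagonal d2) 0 0 0 :
      Matrix (Fin p ⊕ (Fin k ⊕ Fin m)) (Fin p ⊕ (Fin k ⊕ Fin m)) ℝ) = 0 := by
    rw [hY5def, transpose_fromRows, transpose_zero, fromCols_mul_fromBlocks]
    simp only [Matrix.zero_mul, Matrix.mul_zero, add_zero, zero_add]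
    exact fromCols_zero
  have hFY5 : (fromBlocks (diagonal d2) 0 0 0 :
      Matrix (Fin p ⊕ (Fin k ⊕ Fin m)) (Fin p ⊕ (Fin k ⊕ Fin m)) ℝ) * Y5 = 0 := by
    rw [hY5def, fromBlocks_mul_fromRows]
    simp only [Matrix.zero_mul, Matrix.mul_zero, add_zero, zero_add]
    exact fromRows_zero
  have hA5 : (W5ᵀ * A * W5).submatrix E4 E4
      = fromBlocks (fromBlocks 0 0 0 G22) (fromCols 0 Etil) ((fromCols 0 Etil)ᵀ)
          (fromBlocks (diagonal d2) 0 0 0) := by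
    rw [step_congr E4 T5 hA4', hT5def, lower_elim]
    rw [Matrix.fromBlocks_inj]
    refine ⟨?_, ?_, ?_, rfl⟩
    · rw [hEY, hY5F, Matrix.zero_mul, add_zero]
      have hYE : Y5ᵀ * (fromCols 0 Etil : Matrix (Fin k ⊕ Fin l) (Fin p ⊕ (Fin k ⊕ Fin m)) ℝ)ᵀ = fromBlocks (-((2:ℝ)⁻¹ • G11)) 0 (-G12ᵀ) 0 := by
        rw [← transpose_mul, hEY, fromBlocks_transpose, transpose_zero, transpose_zero,
          transpose_neg, transpose_neg, transpose_smul, hG11sym]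
      rw [hYE, hG4blocks, fromBlocks_add, fromBlocks_add]
      rw [Matrix.fromBlocks_inj]
      refine ⟨?_, ?_, ?_, ?_⟩
      · module
      · rw [add_neg_cancel, add_zero]
      · rw [add_zero, add_neg_cancel]
      · rw [add_zero, add_zero]
    · rw [hY5F, add_zero]
    · rw [hFY5, add_zero]
  have hB5 : (W5ᵀ * B * W5).submatrix E4 E4 = fromBlocks 1 0 0 0 := by
    rw [step_congr E4 T5 hB4', hT5def, lower_elim_B]
  -- Stage 6 : diagonalize G22
  obtain ⟨U6, Λ1, hU6, hG22diag⟩ := sym_diag G22 (herm_of_transpose hG22sym)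
  set R6 : Matrix (Fin k ⊕ Fin l) (Fin k ⊕ Fin l) ℝ := fromBlocks 1 0 0 U6 with hR6def
  set T6 : Matrix ((Fin k ⊕ Fin l) ⊕ (Fin p ⊕ (Fin k ⊕ Fin m)))
      ((Fin k ⊕ Fin l) ⊕ (Fin p ⊕ (Fin k ⊕ Fin m))) ℝ := fromBlocks R6 0 0 1 with hT6def
  set W := W5 * T6.submatrix E4.symm E4.symm with hWdef
  have hR6E : R6ᵀ * Etil = Etil := by
    rw [hR6def, hEtildef, fromBlocks_transpose, fromBlocks_mul_fromRows]
    simp only [transpose_one, transpose_zero, Matrix.one_mul, Matrix.zero_mul, Matrix.mul_zero,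
      add_zero, zero_add]
  have hR6orth : R6ᵀ * R6 = 1 := by
    rw [hR6def, fromBlocks_transpose, fromBlocks_multiply]
    simp only [transpose_one, transpose_zero, Matrix.one_mul, Matrix.mul_one, Matrix.zero_mul,
      Matrix.mul_zero, add_zero, zero_add, hU6, fromBlocks_one]
  have hA6 : (Wᵀ * A * W).submatrix E4 E4
      = fromBlocks (fromBlocks 0 0 0 (diagonal Λ1)) (fromCols 0 Etil)
          ((fromCols 0 Etil)ᵀ) (fromBlocks (diagonal d2) 0 0 0) := by
    rw [step_congr E4 T6 hA5, hT6def, diag_conj]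
    rw [Matrix.fromBlocks_inj]
    refine ⟨?_, ?_, ?_, ?_⟩
    · rw [hR6def, fromBlocks_transpose, fromBlocks_multiply, fromBlocks_multiply]
      simp only [transpose_one, transpose_zero, Matrix.one_mul, Matrix.mul_one, Matrix.zero_mul,
        Matrix.mul_zero, add_zero, zero_add, hG22diag]
    · rw [Matrix.mul_one, mul_fromCols, Matrix.mul_zero, hR6E]
    · rw [transpose_one, Matrix.one_mul,
        show (fromCols 0 Etil)ᵀ * R6 = (R6ᵀ * fromCols 0 Etil)ᵀ from by
          rw [transpose_mul, transpose_transpose],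
        mul_fromCols, Matrix.mul_zero, hR6E]
    · rw [transpose_one, Matrix.one_mul, Matrix.mul_one]
  have hB6 : (Wᵀ * B * W).submatrix E4 E4 = fromBlocks 1 0 0 0 := by
    rw [step_congr E4 T6 hB5, hT6def, diag_conj_B _ _ hR6orth]
  -- units
  have hT2u : IsUnit T2 := by
    rw [hT2def]; exact isUnit_fromBlocks_diag isUnit_one (((Matrix.isUnit_iff_isUnit_det _).mpr (Matrix.isUnit_det_of_left_inverse hU2)))
  have hT3u : IsUnit T3 := by rw [hT3def]; exact isUnit_fromBlocks_lower X3
  have hT4u : IsUnit T4 := by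
    rw [hT4def]
    exact isUnit_fromBlocks_diag (((Matrix.isUnit_iff_isUnit_det _).mpr (Matrix.isUnit_det_of_left_inverse hU4)))
      (by rw [hQ4def]; exact isUnit_fromBlocks_diag isUnit_one hVu)
  have hT5u : IsUnit T5 := by rw [hT5def]; exact isUnit_fromBlocks_lower Y5
  have hT6u : IsUnit T6 := by
    rw [hT6def]
    exact isUnit_fromBlocks_diag (((Matrix.isUnit_iff_isUnit_det _).mpr (Matrix.isUnit_det_of_left_inverse hR6orth))) isUnit_one
  have hWu : IsUnit W := by
    rw [hWdef, hW5def, hW4def, hW3def, hW2def]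
    exact ((((hW1u.mul (isUnit_submatrix_equiv e1.symm _ hT2u)).mul
      (isUnit_submatrix_equiv E2.symm _ hT3u)).mul
      (isUnit_submatrix_equiv E2.symm _ hT4u)).mul
      (isUnit_submatrix_equiv E4.symm _ hT5u)).mul
      (isUnit_submatrix_equiv E4.symm _ hT6u)
  -- conclusion
  refine ⟨k, l, p, m, (pairing k l p m).trans E4, W, Λ1, d2, hWu, hd2ne, ?_, ?_⟩
  · rw [reindex_stage E4 (pairing k l p m) _ _ hA6]
    ext x y
    rcases x with ⟨i, a⟩ | (i | (i | i)) <;> rcases y with ⟨j, b⟩ | (j | (j | j)) <;>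
      first
        | (fin_cases a <;> fin_cases b <;>
            simp [pairing, hEtildef, Matrix.one_apply, diagonal_apply, eq_comm])
        | (fin_cases a <;>
            simp [pairing, hEtildef, Matrix.one_apply, diagonal_apply, eq_comm])
        | (fin_cases b <;>
            simp [pairing, hEtildef, Matrix.one_apply, diagonal_apply, eq_comm])
        | simp [pairing, hEtildef, Matrix.one_apply, diagonal_apply, eq_comm]
  · rw [reindex_stage E4 (pairing k l p m) _ _ hB6]
    ext x y
    rcases x with ⟨i, a⟩ | (i | (i | i)) <;> rcases y with ⟨j, b⟩ | (j | (j | j)) <;>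
      first
        | (fin_cases a <;> fin_cases b <;>
            simp [pairing, Matrix.one_apply, eq_comm])
        | (fin_cases a <;>
            simp [pairing, Matrix.one_apply, eq_comm])
        | (fin_cases b <;>
            simp [pairing, Matrix.one_apply, eq_comm])
        | simp [pairing, Matrix.one_apply, eq_comm]
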